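/- Let R ∈ RatFunc ℂ satisfy 𝔉(R) = R, write R = P/Q with P, Q ∈ ℂ[X], Q ≠ 0, and let r be an odd positive integer. Then the rational function S = X^{r−1} · P(X^r) / Q(X^r) ∈ RatFunc ℂ (where P(X^r) and Q(X^r) denote the compositions of P and Q with X^r) also satisfies 𝔉(S) = S. -/

import Mathlib

/-- The `n`-th coefficient of the Laurent expansion at `0` of a rational function. -/
noncomputable def coeffL (R : RatFunc ℂ) (n : ℤ) : ℂ :=
  ((R : LaurentSeries ℂ)).coeff n

/-- Multiplication by `r` as an additive monoid hom on `ℤ`. -/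
def mulrHom (r : ℤ) : ℤ →+ ℤ where
  toFun n := r * n
  map_zero' := by ring
  map_add' a b := by ring

lemma mulrHom_inj {r : ℤ} (hr : 0 < r) : Function.Injective (mulrHom r) := fun a b h =>
  mul_left_cancel₀ hr.ne' h

lemma mulrHom_mono {r : ℤ} (hr : 0 < r) :
    ∀ g g' : ℤ, mulrHom r g ≤ mulrHom r g' ↔ g ≤ g' := by
  intro g g'
  simp [mulrHom, mul_le_mul_iff_right₀ hr]

/-- The "substitute `X^r`" ring hom on Laurent series. -/
noncomputable def subst (r : ℤ) (hr : 0 < r) :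
    LaurentSeries ℂ →+* LaurentSeries ℂ :=
  HahnSeries.embDomainRingHom (mulrHom r) (mulrHom_inj hr) (mulrHom_mono hr)

lemma subst_coeff_mul (r : ℤ) (hr : 0 < r) (x : LaurentSeries ℂ) (a : ℤ) :
    (subst r hr x).coeff (r * a) = x.coeff a := by
  have : (r * a) = (⟨⟨mulrHom r, mulrHom_inj hr⟩, mulrHom_mono hr _ _⟩ : ℤ ↪o ℤ) a := rfl
  rw [subst, HahnSeries.embDomainRingHom_apply, this, HahnSeries.embDomain_coeff]

lemma subst_coeff_not_dvd (r : ℤ) (hr : 0 < r) (x : LaurentSeries ℂ) (m : ℤ)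
    (h : ¬ r ∣ m) : (subst r hr x).coeff m = 0 := by
  rw [subst, HahnSeries.embDomainRingHom_apply]
  apply HahnSeries.embDomain_notin_range
  rintro ⟨a, rfl⟩
  exact h ⟨a, rfl⟩

open scoped RatFunc in
lemma coe_comp_pow (r : ℕ) (hr : 0 < (r : ℤ)) (p : Polynomial ℂ) :
    ((algebraMap (Polynomial ℂ) (RatFunc ℂ) (p.comp (Polynomial.X ^ r)) : RatFunc ℂ) :
      LaurentSeries ℂ)
    = subst r hr ((algebraMap (Polynomial ℂ) (RatFunc ℂ) p : RatFunc ℂ) : LaurentSeries ℂ) := by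
  let c : RatFunc ℂ →+* LaurentSeries ℂ := algebraMap (RatFunc ℂ) (LaurentSeries ℂ)
  let A : Polynomial ℂ →+* LaurentSeries ℂ :=
    (c.comp (algebraMap (Polynomial ℂ) (RatFunc ℂ))).comp
      (Polynomial.eval₂RingHom Polynomial.C (Polynomial.X ^ r))
  let B : Polynomial ℂ →+* LaurentSeries ℂ :=
    (subst r hr).comp (c.comp (algebraMap (Polynomial ℂ) (RatFunc ℂ)))
  have hAB : A = B := by
    apply Polynomial.ringHom_ext
    · intro a
      simp only [A, B, RingHom.comp_apply, Polynomial.coe_eval₂RingHom, Polynomial.eval₂_C]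
      show c (algebraMap (Polynomial ℂ) (RatFunc ℂ) (Polynomial.C a))
        = subst r hr (c (algebraMap (Polynomial ℂ) (RatFunc ℂ) (Polynomial.C a)))
      have h1 : (algebraMap (Polynomial ℂ) (RatFunc ℂ) (Polynomial.C a)) = RatFunc.C a := rfl
      have h2 : c (RatFunc.C a) = HahnSeries.C a := by
        show algebraMap (RatFunc ℂ) (LaurentSeries ℂ) (RatFunc.C a) = _
        rw [← RatFunc.algebraMap_C, ← IsScalarTower.algebraMap_apply]
        simp
      rw [h1, h2]
      exact (HahnSeries.embDomainRingHom_C (f := mulrHom r)).symm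
    · simp only [A, B, RingHom.comp_apply, Polynomial.coe_eval₂RingHom, Polynomial.eval₂_X]
      show c (algebraMap (Polynomial ℂ) (RatFunc ℂ) (Polynomial.X ^ r))
        = subst r hr (c (algebraMap (Polynomial ℂ) (RatFunc ℂ) Polynomial.X))
      have hX : (algebraMap (Polynomial ℂ) (RatFunc ℂ) Polynomial.X) = RatFunc.X := rfl
      have hcX : c RatFunc.X = HahnSeries.single 1 1 := RatFunc.coe_X
      rw [map_pow, hX, hcX]
      have h1 : c (RatFunc.X ^ r) = (HahnSeries.single (1 : ℤ) (1 : ℂ)) ^ r := by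
        rw [map_pow, RatFunc.coe_X]
      rw [h1, HahnSeries.single_pow, one_pow]
      have h2 : subst r hr (HahnSeries.single (1 : ℤ) (1 : ℂ))
          = HahnSeries.single ((r : ℤ)) (1 : ℂ) := by
        rw [subst, HahnSeries.embDomainRingHom_apply, HahnSeries.embDomain_single]
        norm_num [mulrHom]
      rw [h2]
      norm_num
  have := DFunLike.congr_fun hAB p
  simpa [A, B, c, Polynomial.eval₂RingHom, Polynomial.comp] using this

/-- If `R = P/Q` is fixed by `𝔉` and `r` is an odd positive integer, then
`S = X^(r-1) P(X^r)/Q(X^r)` is also fixed by `𝔉`. -/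
theorem stmt_18 (F : RatFunc ℂ → RatFunc ℂ)
    (hF : ∀ R : RatFunc ℂ, ∀ k : ℤ, coeffL (F R) k = coeffL R (2 * k + 1))
    (P Q : Polynomial ℂ) (hQ : Q ≠ 0)
    (hfix : F (algebraMap (Polynomial ℂ) (RatFunc ℂ) P /
      algebraMap (Polynomial ℂ) (RatFunc ℂ) Q) =
      algebraMap (Polynomial ℂ) (RatFunc ℂ) P /
        algebraMap (Polynomial ℂ) (RatFunc ℂ) Q)
    (r : ℕ) (hr : Odd r) (hr' : 0 < r) :
    F (RatFunc.X ^ (r - 1) *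
        algebraMap (Polynomial ℂ) (RatFunc ℂ) (P.comp (Polynomial.X ^ r)) /
        algebraMap (Polynomial ℂ) (RatFunc ℂ) (Q.comp (Polynomial.X ^ r))) =
      RatFunc.X ^ (r - 1) *
        algebraMap (Polynomial ℂ) (RatFunc ℂ) (P.comp (Polynomial.X ^ r)) /
        algebraMap (Polynomial ℂ) (RatFunc ℂ) (Q.comp (Polynomial.X ^ r)) := by
  have hrZ : 0 < (r : ℤ) := by exact_mod_cast hr'
  set R := algebraMap (Polynomial ℂ) (RatFunc ℂ) P /
      algebraMap (Polynomial ℂ) (RatFunc ℂ) Q with hR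
  set S := RatFunc.X ^ (r - 1) *
        algebraMap (Polynomial ℂ) (RatFunc ℂ) (P.comp (Polynomial.X ^ r)) /
        algebraMap (Polynomial ℂ) (RatFunc ℂ) (Q.comp (Polynomial.X ^ r)) with hS
  have hRc : ∀ k : ℤ, coeffL R (2 * k + 1) = coeffL R k := by
    intro k
    have h := hF R k
    rw [hfix] at h
    exact h.symm
  have hcoeS : (S : LaurentSeries ℂ)
      = HahnSeries.single ((r : ℤ) - 1) 1 * subst r hrZ (R : LaurentSeries ℂ) := by
    have h1 : ((r - 1 : ℕ) : ℤ) = (r : ℤ) - 1 := by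
      have := hr'; omega
    open scoped RatFunc in rw [hS, hR, map_div₀ (algebraMap (RatFunc ℂ) (LaurentSeries ℂ)), map_mul, map_pow, RatFunc.coe_X,
      coe_comp_pow r hrZ P, coe_comp_pow r hrZ Q, HahnSeries.single_pow, one_pow,
      map_div₀ (algebraMap (RatFunc ℂ) (LaurentSeries ℂ)), map_div₀ (subst r hrZ), mul_div_assoc, nsmul_eq_mul, mul_one, h1]
  have hT : ∀ n : ℤ, (S : LaurentSeries ℂ).coeff n
      = (subst r hrZ (R : LaurentSeries ℂ)).coeff (n - ((r : ℤ) - 1)) := by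
    intro n
    rw [hcoeS]
    have h2 : n = (n - ((r : ℤ) - 1)) + ((r : ℤ) - 1) := by ring
    calc (HahnSeries.single ((r : ℤ) - 1) 1 * subst r hrZ (R : LaurentSeries ℂ)).coeff n
        = (HahnSeries.single ((r : ℤ) - 1) (1 : ℂ) *
            subst r hrZ (R : LaurentSeries ℂ)).coeff ((n - ((r : ℤ) - 1)) + ((r : ℤ) - 1)) := by
          rw [← h2]
      _ = _ := by rw [HahnSeries.coeff_single_mul_add, one_mul]
  have hMain : ∀ n : ℤ, (S : LaurentSeries ℂ).coeff (2 * n + 1) = (S : LaurentSeries ℂ).coeff n := by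
    intro n
    rw [hT, hT]
    by_cases h : (r : ℤ) ∣ (n - ((r : ℤ) - 1))
    · obtain ⟨a, ha⟩ := h
      have h2 : 2 * n + 1 - ((r : ℤ) - 1) = (r : ℤ) * (2 * a + 1) := by
        have : n = (r : ℤ) * a + ((r : ℤ) - 1) := by linarith [ha]
        rw [this]; ring
      have h3 : n - ((r : ℤ) - 1) = (r : ℤ) * a := ha
      rw [h2, h3, subst_coeff_mul, subst_coeff_mul]
      exact hRc a
    · have h2 : ¬ (r : ℤ) ∣ (2 * n + 1 - ((r : ℤ) - 1)) := by
        intro hd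
        apply h
        have he : 2 * n + 1 - ((r : ℤ) - 1) = (r : ℤ) + 2 * (n - ((r : ℤ) - 1)) := by ring
        rw [he] at hd
        have hd2 : (r : ℤ) ∣ 2 * (n - ((r : ℤ) - 1)) := (dvd_add_right (dvd_refl _)).mp hd
        have hcop : IsCoprime ((r : ℤ)) (2 : ℤ) := by
          rw [Int.isCoprime_iff_gcd_eq_one]
          have hodd : ¬ (2 ∣ r) := by
            have := Nat.odd_iff.mp hr; omega
          have : Nat.Coprime 2 r := (Nat.prime_two.coprime_iff_not_dvd).mpr hodd
          simpa [Int.gcd, Nat.coprime_comm] using Nat.coprime_comm.mp this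
        exact hcop.dvd_of_dvd_mul_left hd2
      rw [subst_coeff_not_dvd _ _ _ _ h2, subst_coeff_not_dvd _ _ _ _ h]
  open scoped RatFunc in apply (algebraMap (RatFunc ℂ) (LaurentSeries ℂ)).injective
  apply HahnSeries.coeff_injective
  funext n
  have h := hF S n
  simp only [coeffL] at h
  exact h.trans (hMain n)
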